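/- Non-discrimination for l-repairs: if the priority ≺ is empty, then the set of l-repairs equals the set of all repairs (maximal independent sets of the conflict graph). -/
import Mathlib


/-- A relation is acyclic if no element is related to itself by the transitive closure. -/
def Acyclic {α : Type*} (prec : α → α → Prop) : Prop :=
  ∀ x, ¬ Relation.TransGen prec x x

/-- The global preference order on sets of tuples: `X ≪ Y`. -/
def ll {α : Type*} (prec : α → α → Prop) (X Y : Set α) : Prop :=
  ∀ x ∈ X \ Y, ∃ y ∈ Y \ X, prec x y

/-- Closed neighborhood of `x` in the conflict graph. -/
def nbhd {α : Type*} (conflict : α → α → Prop) (x : α) : Set α :=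
  {x} ∪ {y | conflict x y}

/-- The winnow operator: elements of `s` not dominated by any element of `s`. -/
def winnow {α : Type*} (prec : α → α → Prop) (s : Set α) : Set α :=
  {t ∈ s | ¬ ∃ t' ∈ s, prec t t'}

/-- A repair: a maximal subset of `r` containing no conflicting pair. -/
def IsRepair {α : Type*} (r : Set α) (conflict : α → α → Prop) (X : Set α) : Prop :=
  X ⊆ r ∧ (∀ a ∈ X, ∀ b ∈ X, ¬ conflict a b) ∧
    ∀ y ∈ r, y ∉ X → ∃ a ∈ X, conflict y a

/-- A locally preferred repair: obtainable by iteratively choosing an undominated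
tuple and removing it together with its conflict neighborhood. -/
def IsLRepair {α : Type*} (r : Set α) (conflict prec : α → α → Prop) (X : Set α) : Prop :=
  ∃ (n : ℕ) (x : Fin n → α), Function.Injective x ∧ X = Set.range x ∧
    (∀ i : Fin n, x i ∈ winnow prec (r \ {y | ∃ j, j < i ∧ y ∈ nbhd conflict (x j)})) ∧
    winnow prec (r \ {y | ∃ i, y ∈ nbhd conflict (x i)}) = ∅

/-- A globally preferred repair: a `≪`-maximal repair. -/
def IsGRepair {α : Type*} (r : Set α) (conflict prec : α → α → Prop) (X : Set α) : Prop :=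
  IsRepair r conflict X ∧ ∀ Y, IsRepair r conflict Y → ll prec X Y → Y = X

/-- non-discrimination for l-repairs. With the empty priority,
the l-repairs are exactly the repairs. -/
theorem lrepair_empty_priority {α : Type*} (r : Set α) (hr : r.Finite)
    (conflict : α → α → Prop)
    (hsymm : ∀ x y, conflict x y → conflict y x)
    (hirr : ∀ x, ¬ conflict x x) (X : Set α) :
    IsLRepair r conflict (fun _ _ => False) X ↔ IsRepair r conflict X := by
  have hw : ∀ s : Set α, winnow (fun _ _ => False) s = s := by
    intro s; ext t; simp [winnow]
  constructor
  · rintro ⟨n, x, hinj, rfl, hmem, hfin⟩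
    simp only [hw] at hmem hfin
    refine ⟨?_, ?_, ?_⟩
    · rintro _ ⟨i, rfl⟩; exact (hmem i).1
    · rintro a ⟨i, rfl⟩ b ⟨j, rfl⟩ hc
      rcases lt_trichotomy i j with h | h | h
      · exact (hmem j).2 ⟨i, h, Or.inr hc⟩
      · exact hirr _ (h ▸ hc)
      · exact (hmem i).2 ⟨j, h, Or.inr (hsymm _ _ hc)⟩
    · intro y hyr hyX
      have : y ∈ {y | ∃ i, y ∈ nbhd conflict (x i)} := by
        by_contra h
        exact (Set.eq_empty_iff_forall_notMem.mp hfin y) ⟨hyr, h⟩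
      obtain ⟨i, hi⟩ := this
      rcases hi with hi | hi
      · exact absurd ⟨i, hi.symm⟩ hyX
      · exact ⟨x i, ⟨i, rfl⟩, hsymm _ _ hi⟩
  · rintro ⟨hXr, hconf, hmax⟩
    have hXfin : X.Finite := hr.subset hXr
    let e := hXfin.toFinset.equivFin
    have hmemX : ∀ i, (↑(e.symm i) : α) ∈ X := fun i =>
      hXfin.mem_toFinset.mp (e.symm i).2
    refine ⟨hXfin.toFinset.card, fun i => ↑(e.symm i),
      fun i j h => e.symm.injective (Subtype.ext h), ?_, ?_, ?_⟩
    · ext y; constructor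
      · intro hy; exact ⟨e ⟨y, hXfin.mem_toFinset.mpr hy⟩, by simp⟩
      · rintro ⟨i, rfl⟩; exact hmemX i
    · intro i
      rw [hw]
      refine ⟨hXr (hmemX i), ?_⟩
      rintro ⟨j, hj, hn⟩
      rcases hn with hn | hn
      · have : i = j := e.symm.injective (Subtype.ext hn)
        exact absurd hj (by simp [this])
      · exact hconf _ (hmemX j) _ (hmemX i) hn
    · rw [hw]
      rw [Set.eq_empty_iff_forall_notMem]
      rintro y ⟨hyr, hyn⟩
      by_cases hy : y ∈ X
      · exact hyn ⟨e ⟨y, hXfin.mem_toFinset.mpr hy⟩, Or.inl (by simp)⟩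
      · obtain ⟨a, haX, hca⟩ := hmax y hyr hy
        obtain ⟨i, rfl⟩ : ∃ i, (↑(e.symm i) : α) = a :=
          ⟨e ⟨a, hXfin.mem_toFinset.mpr haX⟩, by simp⟩
        exact hyn ⟨i, Or.inr (hsymm _ _ hca)⟩
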